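/- Let $a : [t_0, t] \to \mathbb{R}$ be continuous and negative, let $\varepsilon > 0$, $\alpha(t, t_1) = \int_{t_1}^t a(u)\,du$, and let $C \geq 0$ satisfy $|g(t_1)| \leq C$ for all $t_1$. Then $\left| \frac{1}{\varepsilon} \int_{t_0}^t e^{\alpha(t,t_1)/\varepsilon} g(t_1)\, dt_1 \right| \leq C \sup_{u \in [t_0,t]} \frac{1}{|a(u)|}$. -/

import Mathlib

/-- Duhamel-integral bound: for continuous negative `a` on `[t₀,t]`,
`α(t,t₁) = ∫_{t₁}^t a(u) du` and `|g| ≤ C`, one has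
`|(1/ε) ∫_{t₀}^t e^{α(t,t₁)/ε} g(t₁) dt₁| ≤ C sup_{u∈[t₀,t]} 1/|a(u)|`. -/
theorem stmt_13 (t0 t ε C : ℝ) (ht : t0 ≤ t) (hε : 0 < ε) (hC : 0 ≤ C)
    (a g : ℝ → ℝ) (ha_cont : ContinuousOn a (Set.Icc t0 t))
    (ha_neg : ∀ u ∈ Set.Icc t0 t, a u < 0)
    (hg : ∀ t1 ∈ Set.Icc t0 t, |g t1| ≤ C) (hg_cont : ContinuousOn g (Set.Icc t0 t)) :
    |(1/ε) * ∫ t1 in t0..t, Real.exp ((∫ u in t1..t, a u) / ε) * g t1|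
      ≤ C * ⨆ u ∈ Set.Icc t0 t, 1 / |a u| := by
  have huIcc : Set.uIcc t0 t = Set.Icc t0 t := Set.uIcc_of_le ht
  have ht0mem : t0 ∈ Set.Icc t0 t := Set.left_mem_Icc.2 ht
  have htmem : t ∈ Set.Icc t0 t := Set.right_mem_Icc.2 ht
  -- minimum of |a|
  obtain ⟨u₀, hu₀mem, hu₀min⟩ :=
    isCompact_Icc.exists_isMinOn ⟨t0, ht0mem⟩ (continuous_abs.comp_continuousOn ha_cont)
  set m := |a u₀| with hm
  have hmpos : 0 < m := abs_pos.2 (ha_neg u₀ hu₀mem).ne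
  have habs_pos : ∀ u ∈ Set.Icc t0 t, 0 < |a u| := fun u hu => abs_pos.2 (ha_neg u hu).ne
  set M := ⨆ u ∈ Set.Icc t0 t, 1 / |a u| with hMdef
  have hbdd : BddAbove (Set.range fun u => ⨆ _ : u ∈ Set.Icc t0 t, 1 / |a u|) := by
    refine ⟨1 / m, ?_⟩
    rintro y ⟨u, rfl⟩
    dsimp only
    by_cases hu : u ∈ Set.Icc t0 t
    · have : (⨆ _ : u ∈ Set.Icc t0 t, 1 / |a u|) = 1 / |a u| := by
        haveI : Nonempty (u ∈ Set.Icc t0 t) := ⟨hu⟩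
        exact ciSup_const
      rw [this]
      exact one_div_le_one_div_of_le hmpos (hu₀min hu)
    · have : IsEmpty (u ∈ Set.Icc t0 t) := ⟨hu⟩
      rw [Real.iSup_of_isEmpty]
      positivity
  have hMle : ∀ u ∈ Set.Icc t0 t, 1 / |a u| ≤ M := by
    intro u hu
    have h1 : (1 : ℝ) / |a u| = ⨆ _ : u ∈ Set.Icc t0 t, 1 / |a u| := by
      haveI : Nonempty (u ∈ Set.Icc t0 t) := ⟨hu⟩
      exact ciSup_const.symm
    rw [hMdef, h1]
    exact le_ciSup hbdd u
  have hMpos : 0 < M :=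
    lt_of_lt_of_le (one_div_pos.2 (habs_pos t0 ht0mem)) (hMle t0 ht0mem)
  -- integrability of a
  have ha_intOn : MeasureTheory.IntegrableOn a (Set.Icc t0 t) :=
    ha_cont.integrableOn_Icc
  have ha_int : ∀ x ∈ Set.Icc t0 t, ∀ y ∈ Set.Icc t0 t, IntervalIntegrable a
      MeasureTheory.volume x y := fun x hx y hy =>
    (ha_cont.mono (Set.uIcc_subset_Icc hx hy)).intervalIntegrable
  -- primitive G
  set G : ℝ → ℝ := fun x => ∫ u in t0..x, a u with hGdef
  have hGcont : ContinuousOn G (Set.Icc t0 t) := by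
    rw [← huIcc]
    exact intervalIntegral.continuousOn_primitive_interval (huIcc ▸ ha_intOn)
  have hGderiv : ∀ x ∈ Set.Ioo t0 t, HasDerivAt G (a x) x := by
    intro x hx
    have hxI : x ∈ Set.Icc t0 t := Set.Ioo_subset_Icc_self hx
    exact intervalIntegral.integral_hasDerivAt_right (ha_int t0 ht0mem x hxI)
      (ContinuousOn.stronglyMeasurableAtFilter isOpen_Ioo
        (ha_cont.mono Set.Ioo_subset_Icc_self) x hx)
      (ha_cont.continuousAt (Icc_mem_nhds hx.1 hx.2))
  -- rewrite α via G
  have halpha : ∀ t1 ∈ Set.Icc t0 t, (∫ u in t1..t, a u) = G t - G t1 := by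
    intro t1 h1
    have := intervalIntegral.integral_add_adjacent_intervals (ha_int t0 ht0mem t1 h1)
      (ha_int t1 h1 t htmem)
    simp only [hGdef]
    linarith [this]
  -- F and its derivative
  set F : ℝ → ℝ := fun x => ε * Real.exp ((G t - G x) / ε) with hFdef
  set φ : ℝ → ℝ := fun x => Real.exp ((G t - G x) / ε) * (-a x) with hφdef
  have hφcont : ContinuousOn φ (Set.Icc t0 t) := by
    apply ContinuousOn.mul
    · exact Real.continuous_exp.comp_continuousOn
        (((continuousOn_const.sub hGcont).div_const ε))
    · exact ha_cont.neg
  have hFcont : ContinuousOn F (Set.Icc t0 t) :=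
    continuousOn_const.mul (Real.continuous_exp.comp_continuousOn
      ((continuousOn_const.sub hGcont).div_const ε))
  have hFderiv : ∀ x ∈ Set.Ioo t0 t, HasDerivAt F (φ x) x := by
    intro x hx
    have h1 : HasDerivAt (fun y => (G t - G y) / ε) ((0 - a x) / ε) x :=
      ((hasDerivAt_const x (G t)).sub (hGderiv x hx)).div_const ε
    have h2 := (h1.exp.const_mul ε)
    convert h2 using 1
    show Real.exp ((G t - G x) / ε) * (-a x) = ε * (Real.exp ((G t - G x) / ε) * ((0 - a x) / ε))
    field_simp
    ring
    all_goals rfl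
  -- FTC2 for φ
  have hφint : IntervalIntegrable φ MeasureTheory.volume t0 t :=
    (hφcont.mono (by rw [huIcc])).intervalIntegrable
  have hFTC : (∫ x in t0..t, φ x) = F t - F t0 := by
    apply intervalIntegral.integral_eq_sub_of_hasDeriv_right_of_le ht hFcont
    · intro x hx
      exact (hFderiv x hx).hasDerivWithinAt
    · exact hφint
  have hφint_bound : (∫ x in t0..t, φ x) ≤ ε := by
    rw [hFTC]
    have hFt : F t = ε := by simp [hFdef]
    have hFt0 : 0 ≤ F t0 := by positivity
    linarith
  -- rewrite integral
  set ψ : ℝ → ℝ := fun t1 => Real.exp ((G t - G t1) / ε) * g t1 with hψdef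
  have hIcongr : (∫ t1 in t0..t, Real.exp ((∫ u in t1..t, a u) / ε) * g t1)
      = ∫ t1 in t0..t, ψ t1 := by
    apply intervalIntegral.integral_congr
    intro x hx
    rw [huIcc] at hx
    dsimp only
    rw [halpha x hx]
  have hψcont : ContinuousOn ψ (Set.Icc t0 t) :=
    (Real.continuous_exp.comp_continuousOn
      ((continuousOn_const.sub hGcont).div_const ε)).mul hg_cont
  have hψint : IntervalIntegrable ψ MeasureTheory.volume t0 t :=
    (hψcont.mono (by rw [huIcc])).intervalIntegrable
  -- pointwise bound |ψ| ≤ C * M * φ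
  have hpt : ∀ x ∈ Set.Icc t0 t, |ψ x| ≤ C * M * φ x := by
    intro x hx
    have hax : 0 < -a x := neg_pos.2 (ha_neg x hx)
    have hMa : 1 ≤ M * (-a x) := by
      have h1 : 1 / |a x| ≤ M := hMle x hx
      rw [abs_of_neg (ha_neg x hx)] at h1
      rw [div_le_iff₀ hax] at h1
      linarith [h1]
    have hexp : 0 < Real.exp ((G t - G x) / ε) := Real.exp_pos _
    have : |ψ x| = Real.exp ((G t - G x) / ε) * |g x| := by
      rw [hψdef, abs_mul, abs_of_pos hexp]
    rw [this, hφdef]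
    calc Real.exp ((G t - G x) / ε) * |g x|
        ≤ Real.exp ((G t - G x) / ε) * C :=
          mul_le_mul_of_nonneg_left (hg x hx) hexp.le
      _ ≤ (M * (-a x)) * (Real.exp ((G t - G x) / ε) * C) := by
          nlinarith [mul_nonneg hexp.le hC]
      _ = C * M * (Real.exp ((G t - G x) / ε) * (-a x)) := by ring
  -- main estimate
  have hint_abs : |∫ t1 in t0..t, ψ t1| ≤ ∫ t1 in t0..t, |ψ t1| :=
    intervalIntegral.abs_integral_le_integral_abs ht
  have hmono : (∫ t1 in t0..t, |ψ t1|) ≤ ∫ t1 in t0..t, C * M * φ t1 := by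
    apply intervalIntegral.integral_mono_on ht hψint.abs (hφint.const_mul _)
    exact hpt
  have h2 : (∫ t1 in t0..t, C * M * φ t1) = C * M * ∫ t1 in t0..t, φ t1 :=
    intervalIntegral.integral_const_mul _ _
  have hfinal : |∫ t1 in t0..t, ψ t1| ≤ C * M * ε := by
    calc |∫ t1 in t0..t, ψ t1| ≤ ∫ t1 in t0..t, |ψ t1| := hint_abs
      _ ≤ ∫ t1 in t0..t, C * M * φ t1 := hmono
      _ = C * M * ∫ t1 in t0..t, φ t1 := h2
      _ ≤ C * M * ε := by
          apply mul_le_mul_of_nonneg_left hφint_bound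
          positivity
  rw [hIcongr, abs_mul, abs_of_pos (by positivity : (0:ℝ) < 1/ε)]
  calc (1/ε) * |∫ t1 in t0..t, ψ t1| ≤ (1/ε) * (C * M * ε) := by
        apply mul_le_mul_of_nonneg_left hfinal
        positivity
    _ = C * M := by field_simp
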